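/- For every ideal I of S and every n ≥ 1, the n-th p-differential power I^{⟨n⟩_p} := { f ∈ S : δ^a(f) ∈ I for all 0 ≤ a ≤ n−1 } is an ideal of S. -/

import Mathlib

/-- the n-th p-differential power { f | δ^a(f) ∈ I for all a ≤ n-1 }
is an ideal of S. -/
theorem stmt_6 (p : ℕ) (hp : p.Prime) (S : Type*) [CommRing S]
    (hpnzd : ∀ x : S, (p : S) * x = 0 → x = 0)
    (δ : S → S) (hδ : ∃ φ : S →+* S, ∀ x : S, φ x = x ^ p + p * δ x)
    (I : Ideal S) (n : ℕ) (hn : 1 ≤ n) :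
    ∃ K : Ideal S, ∀ f : S, f ∈ K ↔ ∀ a < n, δ^[a] f ∈ I := by
  obtain ⟨φ, hφ⟩ := hδ
  have hppos : 0 < p := hp.pos
  -- δ 0 = 0
  have hδ0 : δ 0 = 0 := by
    apply hpnzd
    have h0 := hφ 0
    rw [map_zero] at h0
    have hz : (0:S) ^ p = 0 := zero_pow hp.pos.ne'
    linear_combination -hz - h0
  -- product rule
  have hδmul : ∀ x y : S, δ (x * y) = (x ^ p + p * δ x) * δ y + y ^ p * δ x := by
    intro x y
    have hm := φ.map_mul x y
    rw [hφ, hφ, hφ] at hm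
    have : (p : S) * (δ (x * y) - ((x ^ p + p * δ x) * δ y + y ^ p * δ x)) = 0 := by
      linear_combination hm
    have h2 := hpnzd _ this
    linear_combination h2
  -- sum rule: δ(x+y) = δ x + δ y - x * d for some d
  have hδadd : ∀ x y : S, ∃ d : S, δ (x + y) = δ x + δ y + x * d := by
    intro x y
    have hbin := add_pow_prime_eq hp x y
    refine ⟨-∑ k ∈ Finset.Ioo 0 p, x ^ (k-1) * y ^ (p - k) * ↑(p.choose k / p), ?_⟩
    have hfac : x * ∑ k ∈ Finset.Ioo 0 p, x ^ (k-1) * y ^ (p - k) * ↑(p.choose k / p)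
        = ∑ k ∈ Finset.Ioo 0 p, x ^ k * y ^ (p - k) * ↑(p.choose k / p) := by
      rw [Finset.mul_sum]
      apply Finset.sum_congr rfl
      intro k hk
      rw [Finset.mem_Ioo] at hk
      have : x ^ k = x * x ^ (k - 1) := by
        conv_lhs => rw [show k = 1 + (k - 1) by omega]
        rw [pow_add, pow_one]
      rw [this]; ring
    have hfac2 : y * ∑ k ∈ Finset.Ioo 0 p, x ^ (k-1) * y ^ (p - k - 1) * ↑(p.choose k / p)
        = ∑ k ∈ Finset.Ioo 0 p, x ^ (k-1) * y ^ (p - k) * ↑(p.choose k / p) := by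
      rw [Finset.mul_sum]
      apply Finset.sum_congr rfl
      intro k hk
      rw [Finset.mem_Ioo] at hk
      have : y ^ (p - k) = y * y ^ (p - k - 1) := by
        conv_lhs => rw [show p - k = 1 + (p - k - 1) by omega]
        rw [pow_add, pow_one]
      rw [this]; ring
    have hm := φ.map_add x y
    rw [hφ, hφ, hφ] at hm
    have hkey : (p : S) * (δ (x + y) - (δ x + δ y +
        x * (-∑ k ∈ Finset.Ioo 0 p, x ^ (k-1) * y ^ (p - k) * ↑(p.choose k / p)))) = 0 := by
      linear_combination hm - hbin - (p:S) * x * hfac2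
    have := hpnzd _ hkey
    linear_combination this
  -- main induction: closure properties of K_m
  have main : ∀ m : ℕ,
      ((∀ a < m, δ^[a] (0:S) ∈ I) ∧
       (∀ s f : S, (∀ a < m, δ^[a] f ∈ I) → ∀ a < m, δ^[a] (s * f) ∈ I) ∧
       (∀ f g : S, (∀ a < m, δ^[a] f ∈ I) → (∀ a < m, δ^[a] g ∈ I) →
          ∀ a < m, δ^[a] (f + g) ∈ I)) := by
    intro m
    induction m with
    | zero => exact ⟨fun a ha => absurd ha (by omega), fun s f _ a ha => absurd ha (by omega),
        fun f g _ _ a ha => absurd ha (by omega)⟩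
    | succ m ih =>
      obtain ⟨ih0, ihmul, ihadd⟩ := ih
      have hit0 : ∀ a : ℕ, δ^[a] (0:S) = 0 := by
        intro a
        induction a with
        | zero => rfl
        | succ b ihb => rw [Function.iterate_succ_apply', ihb, hδ0]
      have hzero : ∀ a < m + 1, δ^[a] (0:S) ∈ I := by
        intro a _
        rw [hit0]; exact I.zero_mem
      refine ⟨hzero, ?_, ?_⟩
      · -- multiplication
        intro s f hf a ha
        match a, ha with
        | 0, _ => exact Ideal.mul_mem_left I s (hf 0 (by omega))
        | b + 1, hb =>
          rw [Function.iterate_succ_apply, hδmul]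
          have hδf : ∀ a < m, δ^[a] (δ f) ∈ I := by
            intro a' ha'
            rw [← Function.iterate_succ_apply]
            exact hf (a' + 1) (by omega)
          have hfm : ∀ a < m, δ^[a] f ∈ I := fun a' ha' => hf a' (by omega)
          have h1 : ∀ a < m, δ^[a] ((s ^ p + p * δ s) * δ f) ∈ I :=
            ihmul _ _ hδf
          have h2 : ∀ a < m, δ^[a] (f ^ p * δ s) ∈ I := by
            have hrw : f ^ p * δ s = (f ^ (p - 1) * δ s) * f := by
              conv_lhs => rw [show p = (p - 1) + 1 by omega]
              ring
            rw [hrw]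
            exact ihmul _ _ hfm
          exact ihadd _ _ h1 h2 b (by omega)
      · -- addition
        intro f g hf hg a ha
        match a, ha with
        | 0, _ => exact I.add_mem (hf 0 (by omega)) (hg 0 (by omega))
        | b + 1, hb =>
          obtain ⟨d, hd⟩ := hδadd f g
          rw [Function.iterate_succ_apply, hd]
          have hδf : ∀ a < m, δ^[a] (δ f) ∈ I := fun a' ha' => by
            rw [← Function.iterate_succ_apply]; exact hf (a' + 1) (by omega)
          have hδg : ∀ a < m, δ^[a] (δ g) ∈ I := fun a' ha' => by
            rw [← Function.iterate_succ_apply]; exact hg (a' + 1) (by omega)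
          have hfm : ∀ a < m, δ^[a] f ∈ I := fun a' ha' => hf a' (by omega)
          have hfd : ∀ a < m, δ^[a] (f * d) ∈ I := by
            have : f * d = d * f := mul_comm f d
            rw [this]
            exact ihmul _ _ hfm
          exact ihadd _ _ (ihadd _ _ hδf hδg) hfd b (by omega)
  obtain ⟨h0, hmul, hadd⟩ := main n
  refine ⟨{
    carrier := {f | ∀ a < n, δ^[a] f ∈ I}
    zero_mem' := h0
    add_mem' := fun {f g} hf hg => hadd f g hf hg
    smul_mem' := fun s f hf => by
      simpa [smul_eq_mul] using hmul s f hf }, fun f => Iff.rfl⟩
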